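/- Let κ : [0,∞) → [0,∞) be a continuous nonnegative function, let T > 0, and let s_{-κ} be the solution of s'' - κ·s = 0 with s(0)=0, s'(0)=1. Then for all s ∈ [0,T], s ≤ s_{-κ}(s) ≤ sinh(√(κ(T))·s)/√(κ(T)), provided κ is nondecreasing and κ(T) > 0. -/

import Mathlib

open Set Real Filter Topology

private lemma nonneg_of_deriv_nonneg' {f f' : ℝ → ℝ} {b : ℝ}
    (hf : ∀ t, HasDerivAt f (f' t) t) (hf0 : f 0 = 0)
    (hd : ∀ t ∈ Ioo (0:ℝ) b, 0 ≤ f' t) : ∀ t ∈ Icc (0:ℝ) b, 0 ≤ f t := by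
  intro t ht
  have hc : Continuous f := continuous_iff_continuousAt.2 fun x => (hf x).continuousAt
  have hmono : MonotoneOn f (Icc 0 b) := by
    apply monotoneOn_of_deriv_nonneg (convex_Icc 0 b) hc.continuousOn
    · intro x _
      exact (hf x).differentiableAt.differentiableWithinAt
    · intro x hx
      rw [interior_Icc] at hx
      rw [(hf x).deriv]
      exact hd x hx
  have h0m : (0:ℝ) ∈ Icc (0:ℝ) b := left_mem_Icc.2 (ht.1.trans ht.2)
  calc (0:ℝ) = f 0 := hf0.symm
  _ ≤ f t := hmono h0m ht ht.1

/-- If κ : [0,∞) → [0,∞) is continuous, nonnegative, nondecreasing with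
κ(T) > 0, and g solves g'' - κ g = 0 with g(0)=0, g'(0)=1, then for all s ∈ [0,T],
s ≤ g(s) ≤ sinh(√(κ(T))·s)/√(κ(T)). -/
theorem jacobi_negative_curvature_comparison
    (κ g gd : ℝ → ℝ) (T : ℝ) (hT : 0 < T)
    (hκcont : ContinuousOn κ (Ici 0))
    (hκnonneg : ∀ t, 0 ≤ t → 0 ≤ κ t)
    (hκmono : ∀ t₁ t₂, 0 ≤ t₁ → t₁ ≤ t₂ → κ t₁ ≤ κ t₂)
    (hκT : 0 < κ T)
    (hg : ∀ t, HasDerivAt g (gd t) t)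
    (hgd : ∀ t, HasDerivAt gd (κ t * g t) t)
    (h0 : g 0 = 0) (h0' : gd 0 = 1) :
    ∀ s ∈ Icc (0 : ℝ) T,
      s ≤ g s ∧ g s ≤ Real.sinh (Real.sqrt (κ T) * s) / Real.sqrt (κ T) := by
  have hgc : Continuous g := continuous_iff_continuousAt.2 fun x => (hg x).continuousAt
  set k := Real.sqrt (κ T) with hkdef
  have hk : 0 < k := Real.sqrt_pos.2 hκT
  have hk2 : k ^ 2 = κ T := Real.sq_sqrt hκT.le
  -- slope limit for g at 0
  have hslope : Tendsto (fun t => g t / t) (𝓝[>] (0:ℝ)) (𝓝 1) := by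
    have h1 := hasDerivAt_iff_tendsto_slope.1 (hg 0)
    rw [h0'] at h1
    have h2 : Tendsto (slope g 0) (𝓝[>] (0:ℝ)) (𝓝 1) :=
      h1.mono_left (nhdsWithin_mono 0 fun x hx => ne_of_gt hx)
    refine h2.congr fun t => ?_
    rw [slope_def_field, h0, sub_zero, sub_zero]
  -- g is eventually positive to the right of 0
  have hev : ∀ᶠ t in 𝓝[>] (0:ℝ), 0 < g t := by
    have h3 : ∀ᶠ t in 𝓝[>] (0:ℝ), 0 < g t / t :=
      hslope.eventually (eventually_gt_nhds (by norm_num))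
    filter_upwards [h3, self_mem_nhdsWithin] with t h1 (h2 : 0 < t)
    have := mul_pos h1 h2
    rwa [div_mul_cancel₀ _ (ne_of_gt h2)] at this
  obtain ⟨δ, (hδ : 0 < δ), hsub⟩ :=
    mem_nhdsGT_iff_exists_Ioo_subset.1 hev
  -- positivity of g on [0, T]
  have hpos : ∀ t ∈ Icc (0:ℝ) T, 0 ≤ g t := by
    by_contra hcon
    push_neg at hcon
    obtain ⟨t₁, ht₁, hgt₁⟩ := hcon
    have ht₁0 : 0 < t₁ := by
      rcases ht₁.1.lt_or_eq with h | h
      · exact h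
      · exact absurd hgt₁ (by rw [← h, h0]; exact lt_irrefl 0)
    set δ' := min (δ/2) t₁ with hδ'
    have hδ'0 : 0 < δ' := lt_min (by linarith) ht₁0
    set S := Icc δ' t₁ ∩ {t | g t ≤ 0} with hS
    have hSne : t₁ ∈ S := ⟨⟨min_le_right _ _, le_refl _⟩, hgt₁.le⟩
    have hSclosed : IsClosed S :=
      isClosed_Icc.inter (isClosed_le hgc continuous_const)
    have hSbdd : BddBelow S := ⟨δ', fun x hx => hx.1.1⟩
    set t₀ := sInf S with ht₀def
    have ht₀S : t₀ ∈ S := hSclosed.csInf_mem ⟨t₁, hSne⟩ hSbdd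
    have ht₀pos : 0 < t₀ := lt_of_lt_of_le hδ'0 ht₀S.1.1
    have ht₀t₁ : t₀ ≤ t₁ := ht₀S.1.2
    have hgpos : ∀ t ∈ Ioo (0:ℝ) t₀, 0 < g t := by
      intro t ht
      by_cases hcase : t < δ'
      · exact hsub ⟨ht.1, lt_of_lt_of_le (lt_of_lt_of_le hcase (min_le_left _ _)) (by linarith)⟩
      · push_neg at hcase
        have htS : t ∉ S := fun hmem => absurd (csInf_le hSbdd hmem) (not_le.2 ht.2)
        have : t ∈ Icc δ' t₁ := ⟨hcase, le_trans ht.2.le ht₀t₁⟩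
        by_contra hng
        push_neg at hng
        exact htS ⟨this, hng⟩
    -- gd ≥ 1 on [0, t₀]
    have hgd1 : ∀ t ∈ Icc (0:ℝ) t₀, 0 ≤ gd t - 1 := by
      apply nonneg_of_deriv_nonneg' (f' := fun t => κ t * g t)
        (fun t => (hgd t).sub_const 1) (by rw [h0']; ring)
      intro t ht
      exact mul_nonneg (hκnonneg t ht.1.le) (hgpos t ht).le
    have hgt : ∀ t ∈ Icc (0:ℝ) t₀, 0 ≤ g t - t := by
      apply nonneg_of_deriv_nonneg' (f' := fun t => gd t - 1)
        (fun t => (hg t).sub (hasDerivAt_id t)) (by simp [h0])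
      intro t ht
      exact hgd1 t ⟨ht.1.le, ht.2.le⟩
    have := hgt t₀ ⟨ht₀pos.le, le_refl _⟩
    have hgneg : g t₀ ≤ 0 := ht₀S.2
    linarith
  -- lower bound on [0, T]
  have hgd1T : ∀ t ∈ Icc (0:ℝ) T, 0 ≤ gd t - 1 := by
    apply nonneg_of_deriv_nonneg' (f' := fun t => κ t * g t)
      (fun t => (hgd t).sub_const 1) (by rw [h0']; ring)
    intro t ht
    exact mul_nonneg (hκnonneg t ht.1.le) (hpos t ⟨ht.1.le, ht.2.le⟩)
  have hlow : ∀ t ∈ Icc (0:ℝ) T, 0 ≤ g t - t := by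
    apply nonneg_of_deriv_nonneg' (f' := fun t => gd t - 1)
      (fun t => (hg t).sub (hasDerivAt_id t)) (by simp [h0])
    intro t ht
    exact hgd1T t ⟨ht.1.le, ht.2.le⟩
  -- comparison function h t = sinh (k t) / k
  have hkt : ∀ t : ℝ, HasDerivAt (fun t : ℝ => k * t) k t := by
    intro t
    simpa using (hasDerivAt_id t).const_mul k
  have hh : ∀ t : ℝ, HasDerivAt (fun t => Real.sinh (k * t) / k) (Real.cosh (k * t)) t := by
    intro t
    have h2 := ((hkt t).sinh).div_const k
    simpa [mul_div_assoc, div_self hk.ne'] using h2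
  have hh' : ∀ t : ℝ, HasDerivAt (fun t => Real.cosh (k * t)) (Real.sinh (k * t) * k) t :=
    fun t => (hkt t).cosh
  -- the Wronskian-type quantity ψ is nonnegative on [0, T]
  have hψ : ∀ t ∈ Icc (0:ℝ) T,
      0 ≤ g t * Real.cosh (k * t) - gd t * (Real.sinh (k * t) / k) := by
    apply nonneg_of_deriv_nonneg'
      (f' := fun t => (gd t * Real.cosh (k * t) + g t * (Real.sinh (k * t) * k)) -
        (κ t * g t * (Real.sinh (k * t) / k) + gd t * Real.cosh (k * t)))
      (fun t => ((hg t).mul (hh' t)).sub ((hgd t).mul (hh t)))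
      (by simp [h0, h0'])
    intro t ht
    have hκle : κ t ≤ κ T := hκmono t T ht.1.le ht.2.le
    have hgnn : 0 ≤ g t := hpos t ⟨ht.1.le, ht.2.le⟩
    have hsnn : 0 ≤ Real.sinh (k * t) := (Real.sinh_pos_iff.2 (mul_pos hk ht.1)).le
    have key : (gd t * Real.cosh (k * t) + g t * (Real.sinh (k * t) * k)) -
        (κ t * g t * (Real.sinh (k * t) / k) + gd t * Real.cosh (k * t)) =
        g t * Real.sinh (k * t) * ((κ T - κ t) / k) := by
      rw [← hk2]
      field_simp
      ring
    rw [key]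
    exact mul_nonneg (mul_nonneg hgnn hsnn) (div_nonneg (by linarith) hk.le)
  -- slope limit for h at 0
  have hslopeh : Tendsto (fun t => (Real.sinh (k * t) / k) / t) (𝓝[>] (0:ℝ)) (𝓝 1) := by
    have h1 := hasDerivAt_iff_tendsto_slope.1 (hh 0)
    rw [mul_zero, Real.cosh_zero] at h1
    have h2 : Tendsto (slope (fun t => Real.sinh (k * t) / k) 0) (𝓝[>] (0:ℝ)) (𝓝 1) :=
      h1.mono_left (nhdsWithin_mono 0 fun x hx => ne_of_gt hx)
    refine h2.congr fun t => ?_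
    rw [slope_def_field]
    simp
  -- positivity of h
  have hhpos : ∀ t : ℝ, 0 < t → 0 < Real.sinh (k * t) / k :=
    fun t ht => div_pos (Real.sinh_pos_iff.2 (mul_pos hk ht)) hk
  -- limit of the ratio g / h at 0⁺
  have hratio : Tendsto (fun t => g t / (Real.sinh (k * t) / k)) (𝓝[>] (0:ℝ)) (𝓝 1) := by
    have h1 : Tendsto (fun t => (g t / t) / ((Real.sinh (k * t) / k) / t))
        (𝓝[>] (0:ℝ)) (𝓝 1) := by
      have := hslope.div hslopeh one_ne_zero
      rw [div_one] at this
      exact this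
    refine h1.congr' ?_
    filter_upwards [self_mem_nhdsWithin] with t (ht : 0 < t)
    have hne : Real.sinh (k * t) / k ≠ 0 := (hhpos t ht).ne'
    field_simp
  intro s hs
  rcases hs.1.lt_or_eq with hspos | hszero
  swap
  · refine ⟨by rw [← hszero, h0], ?_⟩
    rw [← hszero, h0]
    simp
  constructor
  · linarith [hlow s hs]
  -- antitone ratio
  have hanti : ∀ t ∈ Ioc (0:ℝ) s,
      g s / (Real.sinh (k * s) / k) ≤ g t / (Real.sinh (k * t) / k) := by
    intro t ht
    have hts : t ≤ s := ht.2
    have hAnti : AntitoneOn (fun x => g x / (Real.sinh (k * x) / k)) (Icc t s) := by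
      apply antitoneOn_of_deriv_nonpos (convex_Icc t s)
      · apply ContinuousOn.div hgc.continuousOn
        · exact ((Real.continuous_sinh.comp (continuous_const.mul continuous_id)).div_const
            k).continuousOn
        · intro x hx
          exact (hhpos x (lt_of_lt_of_le ht.1 hx.1)).ne'
      · intro x hx
        rw [interior_Icc] at hx
        have hxpos : 0 < x := lt_trans ht.1 hx.1
        exact (((hg x).div (hh x) (hhpos x hxpos).ne')).differentiableAt.differentiableWithinAt
      · intro x hx
        rw [interior_Icc] at hx
        have hxpos : 0 < x := lt_trans ht.1 hx.1
        have hxT : x ∈ Icc (0:ℝ) T := ⟨hxpos.le, (hx.2.le.trans hs.2)⟩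
        rw [HasDerivAt.deriv (f := fun x => g x / (Real.sinh (k * x) / k)) ((hg x).div (hh x) (hhpos x hxpos).ne')]
        apply div_nonpos_of_nonpos_of_nonneg
        · have := hψ x hxT
          linarith
        · positivity
    exact hAnti ⟨le_refl t, hts⟩ ⟨hts, le_refl s⟩ hts
  have hfin : g s / (Real.sinh (k * s) / k) ≤ 1 := by
    refine ge_of_tendsto hratio ?_
    filter_upwards [Ioo_mem_nhdsGT_of_mem (⟨le_refl 0, hspos⟩ : (0:ℝ) ∈ Ico 0 s)]
      with t ht
    exact hanti t ⟨ht.1, ht.2.le⟩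
  exact (div_le_one (hhpos s hspos)).1 hfin
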